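/- Let Φ be a pro-p group topologically generated by elements x, y, let M be a closed central subgroup of the closed commutator subgroup Φ' with [M, x] and [M, y] well-defined closed subgroups, written additively. Suppose: (P1) the maps a ↦ [a,x] and a ↦ [a,y] on M are injective, and (P2) [M,x] ∩ [M,y] = [[M,x],y]. Let K ⊆ [M,x] + [M,y] be a closed subgroup normal in Φ such that the analogues of P1 and P2 hold modulo K. Then every element w = [a,x] + [b,y] ∈ K with a,b ∈ M lies in [K, Φ] = [K,x] + [K,y]; consequently K = [K,Φ], and since Φ is pro-p, K = 1. -/

import Mathlib

/-- Abelianized form of the key computation in a `2`-generated pro-`p` group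
`Φ = ⟨x,y⟩`: `M` is the (additively written) closed central subgroup of `Φ'`,
and `α a = [a,x]`, `β a = [a,y]` are the commuting continuous additive
endomorphisms induced by conjugation.  Assume P1 (injectivity of `α, β`),
P2 (`[M,x] ∩ [M,y] = [[M,x],y]`), and let `K ≤ [M,x] + [M,y]` be a closed
`Φ`-invariant subgroup such that the analogues of P1, P2 hold modulo `K`.
Then every `w = [a,x] + [b,y] ∈ K` lies in `[K,Φ] = [K,x] + [K,y]`; hence
`K = [K,Φ]`, and since `Φ` is pro-`p` (a closed subgroup `H` of a pro-`p`
group with `H = [H,Φ]` is trivial), `K = 1`. -/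
theorem stmt10 (M : Type*) [AddCommGroup M] [TopologicalSpace M]
    [IsTopologicalAddGroup M]
    (α β : M →+ M) (hαc : Continuous α) (hβc : Continuous β)
    (hcomm : ∀ a, α (β a) = β (α a))
    (P1α : Function.Injective α) (P1β : Function.Injective β)
    (P2 : ∀ w : M, ((∃ a, w = α a) ∧ (∃ b, w = β b)) ↔ ∃ c, w = β (α c))
    (K : AddSubgroup M) (hKcl : IsClosed (K : Set M))
    (hKle : (K : Set M) ⊆ {w | ∃ a b, w = α a + β b})
    (hKα : ∀ k ∈ K, α k ∈ K) (hKβ : ∀ k ∈ K, β k ∈ K)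
    (P1αK : ∀ a, α a ∈ K → a ∈ K) (P1βK : ∀ a, β a ∈ K → a ∈ K)
    (P2K : ∀ a b, α a - β b ∈ K → ∃ c, α a - β (α c) ∈ K)
    (hpro : ∀ H : AddSubgroup M, IsClosed (H : Set M) →
      H = (AddSubgroup.closure (⇑α '' (H : Set M) ∪ ⇑β '' (H : Set M))
        ).topologicalClosure → H = ⊥) :
    (∀ a b : M, α a + β b ∈ K →
      α a + β b ∈ (AddSubgroup.closure (⇑α '' (K : Set M) ∪ ⇑β '' (K : Set M))
        ).topologicalClosure) ∧ K = ⊥ := by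
  set L := (AddSubgroup.closure (⇑α '' (K : Set M) ∪ ⇑β '' (K : Set M))
      ).topologicalClosure with hL
  have part1 : ∀ a b : M, α a + β b ∈ K → α a + β b ∈ L := by
    intro a b hw
    have h1 : α a - β (-b) ∈ K := by simpa [sub_neg_eq_add] using hw
    obtain ⟨c, hc⟩ := P2K a (-b) h1
    have h2 : α (a - β c) ∈ K := by
      rw [map_sub, hcomm]; exact hc
    have h3 : a - β c ∈ K := P1αK _ h2
    have hw' : α a + β b = α (a - β c) + β (b + α c) := by
      simp only [map_sub, map_add, hcomm]
      abel
    rw [hw'] at hw ⊢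
    have h4 : β (b + α c) ∈ K := by
      simpa using K.sub_mem hw h2
    have hsub : AddSubgroup.closure (⇑α '' (K : Set M) ∪ ⇑β '' (K : Set M)) ≤ L :=
      AddSubgroup.le_topologicalClosure _
    have hmα : α (a - β c) ∈ L :=
      hsub (AddSubgroup.subset_closure (Or.inl ⟨_, h3, rfl⟩))
    have hmβ : β (b + α c) ∈ L := by
      have h5 : b + α c ∈ K := P1βK _ h4
      exact hsub (AddSubgroup.subset_closure (Or.inr ⟨_, h5, rfl⟩))
    exact L.add_mem hmα hmβ
  refine ⟨part1, hpro K hKcl ?_⟩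
  apply le_antisymm
  · intro k hk
    obtain ⟨a, b, hab⟩ := hKle hk
    rw [hab] at hk ⊢
    exact part1 a b hk
  · refine AddSubgroup.topologicalClosure_minimal _ ?_ hKcl
    rw [AddSubgroup.closure_le]
    rintro w (⟨k, hk, rfl⟩ | ⟨k, hk, rfl⟩)
    · exact hKα k hk
    · exact hKβ k hk
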